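/- For every positive integer n and all real x with 0 ≤ x < 1, ₂F₁(na/2, (na+1)/2; 1/2; x) = θ₁(x)^{-a} · ₂F₁(a/2, (a+1)/2; 1/2; x·θ₂(x)²/θ₁(x)²), where a is any real number, θ₁(x) = Σ_{k=0}^{⌊n/2⌋} C(n,2k) x^k, θ₂(x) = Σ_{k=0}^{⌊(n-1)/2⌋} C(n,2k+1) x^k, and both hypergeometric series are evaluated via the elementary closed form ₂F₁(b/2,(b+1)/2;1/2;z) = ((1-√z)^{-b}+(1+√z)^{-b})/2. -/

import Mathlib

lemma sum_range_even_odd (f : ℕ → ℝ) (m : ℕ) :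
    ∑ k ∈ Finset.range m, f k
      = ∑ k ∈ Finset.range ((m+1)/2), f (2*k) + ∑ k ∈ Finset.range (m/2), f (2*k+1) := by
  induction m with
  | zero => simp
  | succ m ih =>
    rcases Nat.even_or_odd m with he | ho
    · obtain ⟨j, hj⟩ := he
      have hj2 : m = 2 * j := by omega
      subst hj2
      have h1 : (2*j+1+1)/2 = j+1 := by omega
      have h2 : (2*j+1)/2 = j := by omega
      have h3 : (2*j)/2 = j := by omega
      rw [Finset.sum_range_succ, ih, h1, h2, h3, Finset.sum_range_succ]
      ring
    · obtain ⟨j, hj⟩ := ho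
      subst hj
      have h1 : (2*j+1+1)/2 = j+1 := by omega
      have h2 : (2*j+1+1+1)/2 = j+1 := by omega
      have h3 : (2*j+1)/2 = j := by omega
      rw [Finset.sum_range_succ, ih, h1, h2, h3, Finset.sum_range_succ,
        Finset.sum_range_succ]
      ring

/-- `θ₁(x) = Σ_{k=0}^{⌊n/2⌋} C(n,2k) x^k`. -/
noncomputable def theta1 (n : ℕ) (x : ℝ) : ℝ :=
  ∑ k ∈ Finset.range (n / 2 + 1), (n.choose (2 * k) : ℝ) * x ^ k

/-- `θ₂(x) = Σ_{k=0}^{⌊(n-1)/2⌋} C(n,2k+1) x^k`. -/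
noncomputable def theta2 (n : ℕ) (x : ℝ) : ℝ :=
  ∑ k ∈ Finset.range ((n - 1) / 2 + 1), (n.choose (2 * k + 1) : ℝ) * x ^ k

/-- The dihedral Gauss hypergeometric function
`₂F₁(b/2,(b+1)/2;1/2;z) = ((1-√z)^{-b} + (1+√z)^{-b})/2`, via its closed form. -/
noncomputable def dihedral2F1 (b z : ℝ) : ℝ :=
  ((1 - Real.sqrt z) ^ (-b) + (1 + Real.sqrt z) ^ (-b)) / 2

lemma theta_binom (n : ℕ) (hn : 0 < n) (s : ℝ) :
    theta1 n (s^2) + s * theta2 n (s^2) = (1 + s)^n := by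
  have h := add_pow s 1 n
  simp only [one_pow, mul_one] at h
  rw [add_comm s 1] at h
  rw [h, sum_range_even_odd (fun k => s ^ k * (n.choose k : ℝ)) (n+1)]
  have h1 : (n+1+1)/2 = n/2 + 1 := by omega
  have h2 : (n+1)/2 = (n-1)/2 + 1 := by omega
  rw [h1, h2]
  unfold theta1 theta2
  rw [Finset.mul_sum]
  congr 1 <;> apply Finset.sum_congr rfl <;> intro k _ <;>
    simp [pow_mul, pow_succ, pow_add] <;> ring

lemma theta_binom_neg (n : ℕ) (hn : 0 < n) (s : ℝ) :
    theta1 n (s^2) - s * theta2 n (s^2) = (1 - s)^n := by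
  have h := theta_binom n hn (-s)
  rw [neg_sq] at h
  rw [show (1:ℝ) - s = 1 + -s by ring, ← h]; ring

theorem stmt9 (n : ℕ) (hn : 0 < n) (a : ℝ) (x : ℝ) (hx0 : 0 ≤ x) (hx1 : x < 1) :
    dihedral2F1 ((n : ℝ) * a) x
      = theta1 n x ^ (-a) * dihedral2F1 a (x * theta2 n x ^ 2 / theta1 n x ^ 2) := by
  set s := Real.sqrt x with hs
  have hs0 : 0 ≤ s := Real.sqrt_nonneg x
  have hs1 : s < 1 := by
    rw [hs, show (1:ℝ) = Real.sqrt 1 by simp]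
    exact Real.sqrt_lt_sqrt hx0 (by linarith)
  have hs2 : s ^ 2 = x := Real.sq_sqrt hx0
  set T1 := theta1 n x with hT1
  set T2 := theta2 n x with hT2
  have hplus : T1 + s * T2 = (1 + s) ^ n := by
    rw [hT1, hT2, ← hs2]; exact theta_binom n hn s
  have hminus : T1 - s * T2 = (1 - s) ^ n := by
    rw [hT1, hT2, ← hs2]; exact theta_binom_neg n hn s
  have h1s : (0:ℝ) < 1 - s := by linarith
  have h1s' : (0:ℝ) < 1 + s := by linarith
  have hT1pos : 0 < T1 := by
    have : T1 = ((1 + s) ^ n + (1 - s) ^ n) / 2 := by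
      rw [← hplus, ← hminus]; ring
    rw [this]; positivity
  have hsT2 : 0 ≤ s * T2 := by
    have hle : (1 - s) ^ n ≤ (1 + s) ^ n :=
      pow_le_pow_left₀ h1s.le (by linarith) n
    nlinarith [hplus, hminus]
  have hz : x * T2 ^ 2 / T1 ^ 2 = (s * T2 / T1) ^ 2 := by
    rw [← hs2]; ring
  have hsqz : Real.sqrt (x * T2 ^ 2 / T1 ^ 2) = s * T2 / T1 := by
    rw [hz, Real.sqrt_sq (by positivity)]
  have hne : T1 ≠ 0 := ne_of_gt hT1pos
  have e1 : 1 - s * T2 / T1 = (1 - s) ^ n / T1 := by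
    rw [← hminus]; field_simp
  have e2 : 1 + s * T2 / T1 = (1 + s) ^ n / T1 := by
    rw [← hplus]; field_simp
  have rp1 : ((1 - s) ^ n / T1) ^ (-a) = ((1 - s) ^ n) ^ (-a) / T1 ^ (-a) :=
    Real.div_rpow (by positivity) hT1pos.le _
  have rp2 : ((1 + s) ^ n / T1) ^ (-a) = ((1 + s) ^ n) ^ (-a) / T1 ^ (-a) :=
    Real.div_rpow (by positivity) hT1pos.le _
  have hT1rp : (0:ℝ) < T1 ^ (-a) := Real.rpow_pos_of_pos hT1pos _
  have pow1 : ((1 - s) ^ n) ^ (-a) = (1 - s) ^ (-((n:ℝ) * a)) := by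
    rw [← Real.rpow_natCast (1 - s) n, ← Real.rpow_mul h1s.le]
    ring_nf
  have pow2 : ((1 + s) ^ n) ^ (-a) = (1 + s) ^ (-((n:ℝ) * a)) := by
    rw [← Real.rpow_natCast (1 + s) n, ← Real.rpow_mul h1s'.le]
    ring_nf
  unfold dihedral2F1
  rw [hsqz, e1, e2, rp1, rp2, pow1, pow2, ← hs]
  field_simp
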